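/- (Theorem 7(B),(C)) Let 2 ≤ k ≤ n and suppose the k-clique function f_{n,k} is written in disjunctive normal form: there is a family of terms T_{P_j,N_j}, indexed by j ∈ J, with each P_j, N_j disjoint, such that for every edge assignment x, f_{n,k}(x) = true iff x satisfies T_{P_j,N_j} for some j ∈ J. Then for every k-element subset S of Fin n there exists an index j ∈ J whose term's positive literal set is exactly the set of edges within S (P_j = {edges within S}) and whose negative literal set contains no edge within S (N_j ∩ {edges within S} = ∅). -/

import Mathlib

/-- An edge on the vertex set `Fin n`: an unordered pair of distinct vertices. -/
abbrev Edge (n : ℕ) := {e : Sym2 (Fin n) // ¬ e.IsDiag}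

/-- The `k`-clique Boolean function on edge assignments: `true` iff there is a
`k`-element vertex set all of whose internal edges are present. -/
def cliqueFun (n k : ℕ) (x : Edge n → Bool) : Bool :=
  decide (∃ S : Finset (Fin n), S.card = k ∧
    ∀ e : Edge n, (e : Sym2 (Fin n)) ∈ S.sym2 → x e = true)

/-- The set of edges with both endpoints in `S`. -/
def edgesIn (n : ℕ) (S : Finset (Fin n)) : Finset (Edge n) :=
  Finset.univ.filter (fun e => (e : Sym2 (Fin n)) ∈ S.sym2)

/-- Restriction of `cliqueFun` to the edge variables in `X`, obtained by setting
all edge variables outside `X` to `false`. -/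
def cliqueRestrict (n k : ℕ) (X : Finset (Edge n)) (x : {e : Edge n // e ∈ X} → Bool) : Bool :=
  cliqueFun n k (fun e => if h : e ∈ X then x ⟨e, h⟩ else false)

/-- The permutation of edges induced by a relabeling of the vertices,
sending the edge `{i, j}` to `{σ i, σ j}`. -/
def edgePerm {n : ℕ} (σ : Equiv.Perm (Fin n)) : Equiv.Perm (Edge n) where
  toFun e := ⟨Sym2.map σ e.1, fun h => e.2 ((Sym2.isDiag_map σ.injective).mp h)⟩
  invFun e := ⟨Sym2.map σ.symm e.1, fun h => e.2 ((Sym2.isDiag_map σ.symm.injective).mp h)⟩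
  left_inv e := Subtype.ext (by simp [Sym2.map_map])
  right_inv e := Subtype.ext (by simp [Sym2.map_map])

/-- Theorem 7(B),(C): in any disjunctive normal form of the
`k`-clique function (`2 ≤ k ≤ n`), for every `k`-element vertex set `S` there
is a clause whose positive literal set is exactly the set of edges within `S`
and whose negative literal set contains no edge within `S`. -/
theorem dnf_clause_for_each_clique (n k : ℕ) (hk : 2 ≤ k) (hkn : k ≤ n)
    {J : Type*} (P N : J → Finset (Edge n)) (hPN : ∀ j, Disjoint (P j) (N j))
    (hdnf : ∀ x : Edge n → Bool,
      cliqueFun n k x = true ↔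
        ∃ j : J, (∀ e ∈ P j, x e = true) ∧ (∀ e ∈ N j, x e = false)) :
    ∀ S : Finset (Fin n), S.card = k →
      ∃ j : J, P j = edgesIn n S ∧ ∀ e ∈ N j, e ∉ edgesIn n S := by
  intro S hS
  -- the assignment that turns on exactly the edges within S
  set x : Edge n → Bool := fun e => decide ((e : Sym2 (Fin n)) ∈ S.sym2) with hx
  have hcx : cliqueFun n k x = true := by
    rw [cliqueFun, decide_eq_true_eq]
    exact ⟨S, hS, fun e he => decide_eq_true he⟩
  obtain ⟨j, hPj, hNj⟩ := (hdnf x).mp hcx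
  have hPsub : P j ⊆ edgesIn n S := by
    intro e he
    have := of_decide_eq_true (hPj e he)
    simp only [edgesIn, Finset.mem_filter]
    exact ⟨Finset.mem_univ _, this⟩
  have hNdis : ∀ e ∈ N j, e ∉ edgesIn n S := by
    intro e he hmem
    simp only [edgesIn, Finset.mem_filter] at hmem
    exact of_decide_eq_false (hNj e he) hmem.2
  refine ⟨j, ?_, hNdis⟩
  refine le_antisymm hPsub ?_
  by_contra hcon
  obtain ⟨e₀, he₀S, he₀P⟩ := Finset.not_subset.mp hcon
  -- the assignment missing e₀
  set x' : Edge n → Bool :=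
    fun e => decide ((e : Sym2 (Fin n)) ∈ S.sym2 ∧ e ≠ e₀) with hx'
  have hcx' : cliqueFun n k x' = true := by
    refine (hdnf x').mpr ⟨j, ?_, ?_⟩
    · intro e he
      have h1 : e ∈ edgesIn n S := hPsub he
      simp only [edgesIn, Finset.mem_filter] at h1
      have h2 : e ≠ e₀ := fun h => he₀P (h ▸ he)
      exact decide_eq_true ⟨h1.2, h2⟩
    · intro e he
      have h1 : e ∉ edgesIn n S := hNdis e he
      simp only [edgesIn, Finset.mem_filter, Finset.mem_univ, true_and] at h1
      exact decide_eq_false (fun h => h1 h.1)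
  rw [cliqueFun, decide_eq_true_eq] at hcx'
  obtain ⟨T, hT, hTall⟩ := hcx'
  have hTS : T ⊆ S := by
    intro v hv
    -- find another vertex of T
    have h2 : 1 < T.card := by omega
    obtain ⟨w, hw, hwv⟩ := Finset.exists_mem_ne h2 v
    have hdiag : ¬ (s(v, w)).IsDiag := by
      simpa [Sym2.mk_isDiag_iff] using hwv.symm
    have hmem : (s(v, w)) ∈ T.sym2 := by
      rw [Finset.mk_mem_sym2_iff]; exact ⟨hv, hw⟩
    have := hTall ⟨s(v, w), hdiag⟩ hmem
    simp only [hx', decide_eq_true_eq] at this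
    have := this.1
    rw [Finset.mk_mem_sym2_iff] at this
    exact this.1
  have hTSeq : T = S := Finset.eq_of_subset_of_card_le hTS (by omega)
  -- e₀ is an edge within S = T, so x' e₀ = true, contradiction
  simp only [edgesIn, Finset.mem_filter] at he₀S
  exact (of_decide_eq_true (hTall e₀ (hTSeq ▸ he₀S.2))).2 rfl
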